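/- Incentive compatibility payoff comparison (core of Theorem 3): fix k ∈ {1,…,N}, constants c_0 > 0 and q > 0, and let U : ℝ₊ → ℝ₊ be a Borel measurable function that is nondecreasing on [0,q], satisfies U(y) ≤ R·y for all y ∈ [0,q], U(y) = U(q) for all y ≥ q, where R = U(q)/q, and suppose R ≥ c_0. Let a_k, …, a_N ≥ 0, define the partition events η_k = {ξ_k ≤ 0}, η_t = {ξ_k > 0, …, ξ_{t−1} > 0, ξ_t ≤ 0} for t = k+1, …, N−1, and η_N = {ξ_k > 0, …, ξ_{N−1} > 0}, and let W : Ω → ℝ₊ be a bounded random variable such that W ≤ Σ_{τ=k}^t a_τ almost surely on η_t for every t ∈ {k, …, N}. Then the expected surplus from the deviation is no larger than the truth-telling surplus: E[U(W)] − Σ_{t=k}^N ζ_t(x)·a_t ≤ U(q) − q·ζ_k(x). -/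

import Mathlib

open MeasureTheory

/-- The residual process: `ξ_0 = 0`, `ξ_{k+1} = max{0, ξ_k} + s_k - x_{k+1}`. -/
noncomputable def resid (x s : ℕ → ℝ) : ℕ → ℝ
  | 0 => 0
  | k + 1 => max 0 (resid x s k) + s k - x (k + 1)

/-- The events `η_k = {ξ_k ≤ 0}`, `η_t = {ξ_k > 0, …, ξ_{t-1} > 0, ξ_t ≤ 0}` for
`t = k+1, …, N-1`, and `η_N = {ξ_k > 0, …, ξ_{N-1} > 0}`. -/
def etaEvent (N : ℕ) {Ω : Type*} (x : ℕ → ℝ) (s : Ω → ℕ → ℝ) (k t : ℕ) : Set Ω :=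
  if t = N then {ω | ∀ j, k ≤ j → j < N → 0 < resid x (s ω) j}
  else {ω | (∀ j, k ≤ j → j < t → 0 < resid x (s ω) j) ∧ resid x (s ω) t ≤ 0}

/-- The marginal cost price menu
`ζ_k(x) = c_0 [ P(ξ_k ≤ 0) + Σ_{t=k+1}^N P(ξ_k > 0, …, ξ_{t-1} > 0, ξ_t ≤ 0) ]`. -/
noncomputable def zetaPrice (N : ℕ) {Ω : Type*} [MeasurableSpace Ω] (P : Measure Ω)
    (s : Ω → ℕ → ℝ) (c0 : ℝ) (x : ℕ → ℝ) (k : ℕ) : ℝ :=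
  c0 * ((P {ω | resid x (s ω) k ≤ 0}).toReal +
    ∑ t ∈ Finset.Icc (k + 1) N,
      (P {ω | (∀ j, k ≤ j → j < t → 0 < resid x (s ω) j) ∧
        resid x (s ω) t ≤ 0}).toReal)

/- ### Auxiliary definitions and lemmas -/

/-- The event that the chain of residuals starting at `t` stays positive until `u`,
where the residual drops to `≤ 0`. -/
def chainEvent {Ω : Type*} (x : ℕ → ℝ) (s : Ω → ℕ → ℝ) (t u : ℕ) : Set Ω :=
  {ω | (∀ j, t ≤ j → j < u → 0 < resid x (s ω) j) ∧ resid x (s ω) u ≤ 0}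

/-- The event that some residual in `[t, N]` is `≤ 0`. -/
def stopEvent (N : ℕ) {Ω : Type*} (x : ℕ → ℝ) (s : Ω → ℕ → ℝ) (t : ℕ) : Set Ω :=
  {ω | ∃ u, t ≤ u ∧ u ≤ N ∧ resid x (s ω) u ≤ 0}

/-- Real-valued indicator of a set. -/
noncomputable def ind {Ω : Type*} (S : Set Ω) : Ω → ℝ := S.indicator fun _ => 1

lemma ind_of_mem {Ω : Type*} {S : Set Ω} {ω : Ω} (h : ω ∈ S) : ind S ω = 1 :=
  Set.indicator_of_mem h _

lemma ind_of_not_mem {Ω : Type*} {S : Set Ω} {ω : Ω} (h : ω ∉ S) : ind S ω = 0 :=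
  Set.indicator_of_notMem h _

lemma ind_nonneg {Ω : Type*} (S : Set Ω) (ω : Ω) : 0 ≤ ind S ω :=
  Set.indicator_nonneg (fun _ _ => zero_le_one) ω

section Aux

variable {Ω : Type*} [MeasurableSpace Ω] (x : ℕ → ℝ) (s : Ω → ℕ → ℝ)

lemma ind_integrable (P : Measure Ω) [IsFiniteMeasure P] {S : Set Ω}
    (hS : MeasurableSet S) : Integrable (ind S) P :=
  (integrable_const 1).indicator hS

lemma ind_integral (P : Measure Ω) [IsFiniteMeasure P] {S : Set Ω}
    (hS : MeasurableSet S) : ∫ ω, ind S ω ∂P = (P S).toReal := by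
  rw [ind, integral_indicator_const (1 : ℝ) hS, smul_eq_mul, mul_one, measureReal_def]

lemma resid_measurable (hmeas : Measurable s) (j : ℕ) :
    Measurable fun ω => resid x (s ω) j := by
  induction j with
  | zero => simp only [resid]; exact measurable_const
  | succ j ih =>
    have hsj : Measurable fun ω => s ω j := (measurable_pi_apply j).comp hmeas
    simp only [resid]
    exact ((measurable_const.max ih).add hsj).sub measurable_const

lemma chainEvent_measurable (hmeas : Measurable s) (t u : ℕ) :
    MeasurableSet (chainEvent x s t u) := by
  have h1 : chainEvent x s t u =
      (⋂ j ∈ Finset.Ico t u, {ω | 0 < resid x (s ω) j}) ∩ {ω | resid x (s ω) u ≤ 0} := by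
    ext ω
    simp only [chainEvent, Set.mem_setOf_eq, Set.mem_inter_iff, Set.mem_iInter,
      Finset.mem_Ico, and_imp]
  rw [h1]
  exact (MeasurableSet.biInter (Finset.Ico t u : Finset ℕ).countable_toSet fun j _ =>
      measurableSet_lt measurable_const (resid_measurable x s hmeas j)).inter
    (measurableSet_le (resid_measurable x s hmeas u) measurable_const)

lemma stopEvent_eq (N t : ℕ) :
    stopEvent N x s t = ⋃ u ∈ Finset.Icc t N, chainEvent x s t u := by
  classical
  ext ω
  simp only [stopEvent, Set.mem_setOf_eq, Set.mem_iUnion, Finset.mem_Icc, chainEvent,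
    exists_prop]
  constructor
  · rintro ⟨u, htu, huN, hle⟩
    have hex : ∃ v, t ≤ v ∧ v ≤ N ∧ resid x (s ω) v ≤ 0 := ⟨u, htu, huN, hle⟩
    have hspec := Nat.find_spec hex
    refine ⟨Nat.find hex, ⟨hspec.1, hspec.2.1⟩, fun j hj1 hj2 => ?_, hspec.2.2⟩
    by_contra hcon
    push_neg at hcon
    exact Nat.find_min hex hj2 ⟨hj1, le_trans hj2.le hspec.2.1, hcon⟩
  · rintro ⟨u, ⟨htu, huN⟩, _, hle⟩
    exact ⟨u, htu, huN, hle⟩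

lemma stopEvent_measurable (hmeas : Measurable s) (N t : ℕ) :
    MeasurableSet (stopEvent N x s t) := by
  rw [stopEvent_eq]
  exact (Finset.Icc t N).measurableSet_biUnion fun u _ => chainEvent_measurable x s hmeas t u

lemma chainEvent_disjoint_of_lt (t : ℕ) {u v : ℕ} (htu : t ≤ u) (huv : u < v) :
    Disjoint (chainEvent x s t u) (chainEvent x s t v) := by
  refine Set.disjoint_left.mpr fun ω hωu hωv => ?_
  have h1 : resid x (s ω) u ≤ 0 := hωu.2
  have h2 : 0 < resid x (s ω) u := hωv.1 u htu huv
  linarith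

lemma chainEvent_pdisjoint (N t : ℕ) :
    (↑(Finset.Icc t N) : Set ℕ).PairwiseDisjoint (chainEvent x s t) := by
  intro u hu v hv huv
  simp only [Finset.coe_Icc, Set.mem_Icc] at hu hv
  rcases huv.lt_or_gt with h | h
  · exact chainEvent_disjoint_of_lt x s t hu.1 h
  · exact (chainEvent_disjoint_of_lt x s t hv.1 h).symm

lemma zetaPrice_eq (P : Measure Ω) [IsProbabilityMeasure P] (hmeas : Measurable s)
    (c0 : ℝ) {N t : ℕ} (htN : t ≤ N) :
    zetaPrice N P s c0 x t = c0 * (P (stopEvent N x s t)).toReal := by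
  have h0 : {ω : Ω | resid x (s ω) t ≤ 0} = chainEvent x s t t := by
    ext ω
    constructor
    · intro h
      exact ⟨fun j h1 h2 => absurd h2 (by omega), h⟩
    · intro h
      exact h.2
  have hIcc : Finset.Icc t N = insert t (Finset.Icc (t + 1) N) := by
    ext j
    simp only [Finset.mem_Icc, Finset.mem_insert]
    omega
  have hnot : t ∉ Finset.Icc (t + 1) N := by simp
  have hsum : (P {ω | resid x (s ω) t ≤ 0}).toReal +
      ∑ u ∈ Finset.Icc (t + 1) N, (P (chainEvent x s t u)).toReal
      = ∑ u ∈ Finset.Icc t N, (P (chainEvent x s t u)).toReal := by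
    rw [hIcc, Finset.sum_insert hnot, h0]
  have hmain : ∑ u ∈ Finset.Icc t N, (P (chainEvent x s t u)).toReal
      = (P (stopEvent N x s t)).toReal := by
    rw [← ENNReal.toReal_sum fun u _ => measure_ne_top P _,
      ← measure_biUnion_finset (chainEvent_pdisjoint x s N t)
        (fun u _ => chainEvent_measurable x s hmeas t u),
      ← stopEvent_eq]
  rw [zetaPrice]
  rw [show (∑ u ∈ Finset.Icc (t + 1) N,
      (P {ω | (∀ j, t ≤ j → j < u → 0 < resid x (s ω) j) ∧ resid x (s ω) u ≤ 0}).toReal)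
      = ∑ u ∈ Finset.Icc (t + 1) N, (P (chainEvent x s t u)).toReal from rfl]
  rw [hsum, hmain]

lemma etaEvent_measurable (hmeas : Measurable s) (N k t : ℕ) :
    MeasurableSet (etaEvent N x s k t) := by
  rw [etaEvent]
  split
  · have h1 : {ω : Ω | ∀ j, k ≤ j → j < N → 0 < resid x (s ω) j} =
        ⋂ j ∈ Finset.Ico k N, {ω | 0 < resid x (s ω) j} := by
      ext ω
      simp only [Set.mem_setOf_eq, Set.mem_iInter, Finset.mem_Ico, and_imp]
    rw [h1]
    exact MeasurableSet.biInter (Finset.Ico k N : Finset ℕ).countable_toSet fun j _ =>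
      measurableSet_lt measurable_const (resid_measurable x s hmeas j)
  · exact chainEvent_measurable x s hmeas k t

lemma etaEvent_disjoint_of_lt (N k : ℕ) {u v : ℕ} (hku : k ≤ u) (huv : u < v)
    (hvN : v ≤ N) : Disjoint (etaEvent N x s k u) (etaEvent N x s k v) := by
  refine Set.disjoint_left.mpr fun ω hωu hωv => ?_
  have huN : u ≠ N := by omega
  rw [etaEvent, if_neg huN] at hωu
  have h1 : resid x (s ω) u ≤ 0 := hωu.2
  have h2 : 0 < resid x (s ω) u := by
    rw [etaEvent] at hωv
    by_cases hv' : v = N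
    · rw [if_pos hv'] at hωv
      exact hωv u hku (by omega)
    · rw [if_neg hv'] at hωv
      exact hωv.1 u hku huv
  linarith

lemma etaEvent_pdisjoint (N k : ℕ) :
    (↑(Finset.Icc k N) : Set ℕ).PairwiseDisjoint (etaEvent N x s k) := by
  intro u hu v hv huv
  simp only [Finset.coe_Icc, Set.mem_Icc] at hu hv
  rcases huv.lt_or_gt with h | h
  · exact etaEvent_disjoint_of_lt x s N k hu.1 h hv.2
  · exact (etaEvent_disjoint_of_lt x s N k hv.1 h hu.2).symm

lemma etaEvent_cover (N k : ℕ) (hkN : k ≤ N) :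
    ⋃ t ∈ Finset.Icc k N, etaEvent N x s k t = Set.univ := by
  classical
  ext ω
  simp only [Set.mem_iUnion, Set.mem_univ, iff_true, Finset.mem_Icc, exists_prop]
  by_cases hex : ∃ t, k ≤ t ∧ t < N ∧ resid x (s ω) t ≤ 0
  · have hspec := Nat.find_spec hex
    have hfindN : Nat.find hex ≠ N := by omega
    refine ⟨Nat.find hex, ⟨hspec.1, hspec.2.1.le⟩, ?_⟩
    rw [etaEvent, if_neg hfindN]
    refine ⟨fun j hj1 hj2 => ?_, hspec.2.2⟩
    by_contra hcon
    push_neg at hcon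
    exact Nat.find_min hex hj2 ⟨hj1, lt_trans hj2 hspec.2.1, hcon⟩
  · push_neg at hex
    refine ⟨N, ⟨hkN, le_refl N⟩, ?_⟩
    rw [etaEvent, if_pos rfl]
    intro j hj1 hj2
    exact hex j hj1 hj2

end Aux

theorem incentive_compatibility_payoff_comparison
    (N : ℕ) (hN : 1 ≤ N)
    {Ω : Type*} [MeasurableSpace Ω] (P : Measure Ω) [IsProbabilityMeasure P]
    (s : Ω → ℕ → ℝ) (hmeas : Measurable s)
    (hs : ∀ ω, ∀ j, j < N → 0 ≤ s ω j)
    (x : ℕ → ℝ) (hx : ∀ j, 1 ≤ j → j ≤ N → 0 ≤ x j)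
    (k : ℕ) (hk : 1 ≤ k) (hkN : k ≤ N)
    (c0 q R : ℝ) (hc0 : 0 < c0) (hq : 0 < q)
    (U : ℝ → ℝ) (hUmeas : Measurable U)
    (hUnonneg : ∀ y, 0 ≤ y → 0 ≤ U y)
    (hUmono : MonotoneOn U (Set.Icc 0 q))
    (hUlin : ∀ y ∈ Set.Icc (0 : ℝ) q, U y ≤ R * y)
    (hUsat : ∀ y, q ≤ y → U y = U q)
    (hRq : R = U q / q) (hR : c0 ≤ R)
    (a : ℕ → ℝ) (ha : ∀ t ∈ Finset.Icc k N, 0 ≤ a t)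
    (W : Ω → ℝ) (hWmeas : Measurable W)
    (hWnonneg : ∀ ω, 0 ≤ W ω) (C : ℝ) (hWbdd : ∀ ω, W ω ≤ C)
    (hWle : ∀ t ∈ Finset.Icc k N, ∀ᵐ ω ∂P,
      ω ∈ etaEvent N x s k t → W ω ≤ ∑ τ ∈ Finset.Icc k t, a τ) :
    (∫ ω, U (W ω) ∂P) - ∑ t ∈ Finset.Icc k N, zetaPrice N P s c0 x t * a t ≤
      U q - q * zetaPrice N P s c0 x k := by
  classical
  -- basic facts about U and R
  have hq' : q ≠ 0 := ne_of_gt hq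
  have hUqnn : 0 ≤ U q := hUnonneg q hq.le
  have hR0 : 0 ≤ R := hRq ▸ div_nonneg hUqnn hq.le
  have hUqR : U q = R * q := by rw [hRq]; field_simp
  have hUle : ∀ y, 0 ≤ y → U y ≤ R * min q y := by
    intro y hy
    rcases le_or_gt y q with h | h
    · rw [min_eq_right h]
      exact hUlin y ⟨hy, h⟩
    · rw [hUsat y h.le, min_eq_left h.le, ← hUqR]
  have hUleq : ∀ y, 0 ≤ y → U y ≤ U q := by
    intro y hy
    calc U y ≤ R * min q y := hUle y hy
      _ ≤ R * q := mul_le_mul_of_nonneg_left (min_le_left _ _) hR0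
      _ = U q := hUqR.symm
  -- abbreviations
  set S : ℕ → ℝ := fun t => ∑ τ ∈ Finset.Icc k t, a τ with hS
  set m : ℕ → ℝ := fun t => min q (S t) with hm
  have hmq : ∀ t, m t ≤ q := fun t => min_le_left _ _
  -- measurability
  have hEmeas : ∀ t, MeasurableSet (stopEvent N x s t) :=
    fun t => stopEvent_measurable x s hmeas N t
  have hηmeas : ∀ t, MeasurableSet (etaEvent N x s k t) :=
    fun t => etaEvent_measurable x s hmeas N k t
  -- probabilities
  set p : ℕ → ℝ := fun t => (P (etaEvent N x s k t)).toReal with hp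
  have hpnn : ∀ t, 0 ≤ p t := fun t => ENNReal.toReal_nonneg
  have hpsum : ∑ t ∈ Finset.Icc k N, p t = 1 := by
    have h1 : ∑ t ∈ Finset.Icc k N, P (etaEvent N x s k t) = 1 := by
      rw [← measure_biUnion_finset (etaEvent_pdisjoint x s N k) fun t _ => hηmeas t,
        etaEvent_cover x s N k hkN, measure_univ]
    calc ∑ t ∈ Finset.Icc k N, p t
        = (∑ t ∈ Finset.Icc k N, P (etaEvent N x s k t)).toReal :=
          (ENNReal.toReal_sum fun t _ => measure_ne_top P _).symm
      _ = 1 := by rw [h1, ENNReal.toReal_one]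
  -- the cover/pick lemma
  have hcov : ∀ ω : Ω, ∃ t0 ∈ Finset.Icc k N, ω ∈ etaEvent N x s k t0 := by
    intro ω
    have hω : ω ∈ ⋃ t ∈ Finset.Icc k N, etaEvent N x s k t := by
      rw [etaEvent_cover x s N k hkN]; trivial
    simpa using hω
  have hpick : ∀ (g : ℕ → ℝ) (ω : Ω) (t0 : ℕ), t0 ∈ Finset.Icc k N →
      ω ∈ etaEvent N x s k t0 →
      ∑ t ∈ Finset.Icc k N, g t * ind (etaEvent N x s k t) ω = g t0 := by
    intro g ω t0 ht0 hωt0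
    rw [Finset.sum_eq_single_of_mem t0 ht0]
    · rw [ind_of_mem hωt0, mul_one]
    · intro t ht htne
      have hnot : ω ∉ etaEvent N x s k t := fun hmem =>
        Set.disjoint_left.mp
          (etaEvent_pdisjoint x s N k (Finset.mem_coe.mpr ht) (Finset.mem_coe.mpr ht0) htne)
          hmem hωt0
      rw [ind_of_not_mem hnot, mul_zero]
  -- Step B, pointwise inequality
  have hpt : ∀ ω, q * ind (stopEvent N x s k) ω -
      ∑ t ∈ Finset.Icc k N, a t * ind (stopEvent N x s t) ω ≤
      ∑ t ∈ Finset.Icc k N, (q - m t) * ind (etaEvent N x s k t) ω := by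
    intro ω
    obtain ⟨t0, ht0, hωt0⟩ := hcov ω
    rw [hpick (fun t => q - m t) ω t0 ht0 hωt0]
    obtain ⟨hkt0, ht0N⟩ := Finset.mem_Icc.mp ht0
    by_cases hEk : ω ∈ stopEvent N x s k
    · have hall : ∀ t, k ≤ t → t ≤ t0 → ω ∈ stopEvent N x s t := by
        intro t h1 h2
        by_cases ht0N' : t0 = N
        · obtain ⟨u, hu1, hu2, hu3⟩ := hEk
          have hchain : ∀ j, k ≤ j → j < N → 0 < resid x (s ω) j := by
            rw [etaEvent, if_pos ht0N'] at hωt0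
            exact hωt0
          have huN : u = N := by
            by_contra hne
            have := hchain u hu1 (lt_of_le_of_ne hu2 hne)
            linarith
          exact ⟨N, by omega, le_refl N, huN ▸ hu3⟩
        · rw [etaEvent, if_neg ht0N'] at hωt0
          exact ⟨t0, h2, ht0N, hωt0.2⟩
      have hfE1 : ∀ t, k ≤ t → t ≤ t0 → ind (stopEvent N x s t) ω = 1 :=
        fun t h1 h2 => ind_of_mem (hall t h1 h2)
      have hsub : Finset.Icc k t0 ⊆ Finset.Icc k N := Finset.Icc_subset_Icc_right ht0N
      have hsumge : S t0 ≤ ∑ t ∈ Finset.Icc k N, a t * ind (stopEvent N x s t) ω := by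
        calc S t0 = ∑ t ∈ Finset.Icc k t0, a t * ind (stopEvent N x s t) ω := by
              rw [hS]
              refine Finset.sum_congr rfl fun t ht => ?_
              obtain ⟨h1, h2⟩ := Finset.mem_Icc.mp ht
              rw [hfE1 t h1 h2, mul_one]
          _ ≤ ∑ t ∈ Finset.Icc k N, a t * ind (stopEvent N x s t) ω :=
              Finset.sum_le_sum_of_subset_of_nonneg hsub fun t ht _ =>
                mul_nonneg (ha t ht) (ind_nonneg _ ω)
      have hmS : m t0 ≤ S t0 := min_le_right _ _
      rw [hfE1 k le_rfl hkt0, mul_one]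
      linarith
    · have h0 : ∀ t, k ≤ t → ind (stopEvent N x s t) ω = 0 := by
        intro t h1
        refine ind_of_not_mem fun hmem => hEk ?_
        obtain ⟨u, hu1, hu2, hu3⟩ := hmem
        exact ⟨u, le_trans h1 hu1, hu2, hu3⟩
      rw [h0 k le_rfl, mul_zero,
        Finset.sum_eq_zero fun t ht => by rw [h0 t (Finset.mem_Icc.mp ht).1, mul_zero]]
      have := hmq t0
      linarith
  -- Step B, integrated
  have hintE : ∀ t, Integrable (fun ω => a t * ind (stopEvent N x s t) ω) P :=
    fun t => (ind_integrable P (hEmeas t)).const_mul (a t)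
  have hintη : ∀ (c : ℕ → ℝ) (t : ℕ),
      Integrable (fun ω => c t * ind (etaEvent N x s k t) ω) P :=
    fun c t => (ind_integrable P (hηmeas t)).const_mul (c t)
  have hB : q * (P (stopEvent N x s k)).toReal -
      ∑ t ∈ Finset.Icc k N, a t * (P (stopEvent N x s t)).toReal ≤
      ∑ t ∈ Finset.Icc k N, (q - m t) * p t := by
    have hint1 : Integrable (fun ω => q * ind (stopEvent N x s k) ω -
        ∑ t ∈ Finset.Icc k N, a t * ind (stopEvent N x s t) ω) P :=
      ((ind_integrable P (hEmeas k)).const_mul q).sub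
        (integrable_finset_sum _ fun t _ => hintE t)
    have hint2 : Integrable
        (fun ω => ∑ t ∈ Finset.Icc k N, (q - m t) * ind (etaEvent N x s k t) ω) P :=
      integrable_finset_sum _ fun t _ => hintη (fun t => q - m t) t
    have hmono := integral_mono hint1 hint2 hpt
    rw [integral_sub ((ind_integrable P (hEmeas k)).const_mul q)
        (integrable_finset_sum _ fun t _ => hintE t),
      integral_const_mul, ind_integral P (hEmeas k),
      integral_finset_sum _ (fun t _ => hintE t),
      integral_finset_sum _ (fun t _ => hintη (fun t => q - m t) t)] at hmono
    simp only [integral_const_mul] at hmono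
    calc q * (P (stopEvent N x s k)).toReal -
        ∑ t ∈ Finset.Icc k N, a t * (P (stopEvent N x s t)).toReal
        = q * (P (stopEvent N x s k)).toReal -
          ∑ t ∈ Finset.Icc k N, a t * ∫ ω, ind (stopEvent N x s t) ω ∂P := by
          refine congrArg _ (Finset.sum_congr rfl fun t _ => ?_)
          rw [ind_integral P (hEmeas t)]
      _ ≤ ∑ t ∈ Finset.Icc k N, (q - m t) * ∫ ω, ind (etaEvent N x s k t) ω ∂P := hmono
      _ = ∑ t ∈ Finset.Icc k N, (q - m t) * p t := by
          refine Finset.sum_congr rfl fun t _ => ?_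
          rw [ind_integral P (hηmeas t), hp]
  -- translate into the prices ζ
  have hζeq : ∀ t, t ≤ N →
      zetaPrice N P s c0 x t = c0 * (P (stopEvent N x s t)).toReal :=
    fun t ht => zetaPrice_eq x s P hmeas c0 ht
  have hζB : q * zetaPrice N P s c0 x k -
      ∑ t ∈ Finset.Icc k N, zetaPrice N P s c0 x t * a t ≤
      R * ∑ t ∈ Finset.Icc k N, (q - m t) * p t := by
    have h1 : ∑ t ∈ Finset.Icc k N, zetaPrice N P s c0 x t * a t =
        c0 * ∑ t ∈ Finset.Icc k N, a t * (P (stopEvent N x s t)).toReal := by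
      rw [Finset.mul_sum]
      refine Finset.sum_congr rfl fun t ht => ?_
      rw [hζeq t (Finset.mem_Icc.mp ht).2]
      ring
    have hsumnn : 0 ≤ ∑ t ∈ Finset.Icc k N, (q - m t) * p t :=
      Finset.sum_nonneg fun t _ => mul_nonneg (by linarith [hmq t]) (hpnn t)
    have h2 : c0 * (q * (P (stopEvent N x s k)).toReal -
        ∑ t ∈ Finset.Icc k N, a t * (P (stopEvent N x s t)).toReal) ≤
        c0 * ∑ t ∈ Finset.Icc k N, (q - m t) * p t :=
      mul_le_mul_of_nonneg_left hB hc0.le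
    have h3 : c0 * ∑ t ∈ Finset.Icc k N, (q - m t) * p t ≤
        R * ∑ t ∈ Finset.Icc k N, (q - m t) * p t :=
      mul_le_mul_of_nonneg_right hR hsumnn
    rw [hζeq k hkN, h1]
    nlinarith [h2, h3]
  -- Step A: bound on the expected utility
  have hintU : Integrable (fun ω => U (W ω)) P := by
    refine (integrable_const (U q)).mono'
      ((hUmeas.comp hWmeas).aestronglyMeasurable) ?_
    refine Filter.Eventually.of_forall fun ω => ?_
    rw [Real.norm_eq_abs, abs_of_nonneg (hUnonneg _ (hWnonneg ω))]
    exact hUleq _ (hWnonneg ω)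
  have hAae : ∀ᵐ ω ∂P, U (W ω) ≤
      ∑ t ∈ Finset.Icc k N, (R * m t) * ind (etaEvent N x s k t) ω := by
    have hall : ∀ᵐ ω ∂P, ∀ t ∈ Finset.Icc k N,
        ω ∈ etaEvent N x s k t → W ω ≤ S t :=
      (Filter.eventually_all_finset _).mpr hWle
    filter_upwards [hall] with ω hω
    obtain ⟨t0, ht0, hωt0⟩ := hcov ω
    rw [hpick (fun t => R * m t) ω t0 ht0 hωt0]
    have hWS : W ω ≤ S t0 := hω t0 ht0 hωt0
    calc U (W ω) ≤ R * min q (W ω) := hUle _ (hWnonneg ω)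
      _ ≤ R * m t0 :=
          mul_le_mul_of_nonneg_left (min_le_min le_rfl hWS) hR0
  have hA : ∫ ω, U (W ω) ∂P ≤ ∑ t ∈ Finset.Icc k N, (R * m t) * p t := by
    have hint2 : Integrable
        (fun ω => ∑ t ∈ Finset.Icc k N, (R * m t) * ind (etaEvent N x s k t) ω) P :=
      integrable_finset_sum _ fun t _ => hintη (fun t => R * m t) t
    have hmono := integral_mono_ae hintU hint2 hAae
    rw [integral_finset_sum _ (fun t _ => hintη (fun t => R * m t) t)] at hmono
    simp only [integral_const_mul] at hmono
    calc ∫ ω, U (W ω) ∂P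
        ≤ ∑ t ∈ Finset.Icc k N, (R * m t) * ∫ ω, ind (etaEvent N x s k t) ω ∂P := hmono
      _ = ∑ t ∈ Finset.Icc k N, (R * m t) * p t := by
          refine Finset.sum_congr rfl fun t _ => ?_
          rw [ind_integral P (hηmeas t), hp]
  -- combine
  have hkey : ∑ t ∈ Finset.Icc k N, (R * m t) * p t +
      R * ∑ t ∈ Finset.Icc k N, (q - m t) * p t = U q := by
    rw [hUqR, Finset.mul_sum, ← Finset.sum_add_distrib]
    calc ∑ t ∈ Finset.Icc k N, ((R * m t) * p t + R * ((q - m t) * p t))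
        = ∑ t ∈ Finset.Icc k N, (R * q) * p t :=
          Finset.sum_congr rfl fun t _ => by ring
      _ = (R * q) * ∑ t ∈ Finset.Icc k N, p t := by rw [← Finset.mul_sum]
      _ = R * q := by rw [hpsum, mul_one]
  linarith [hA, hζB, hkey]
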